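/- Let Γ be a finite simple graph with no 4-cycle subgraph. Then the number of edges of the line graph L(Γ) equals the number of edges of the 2-distance graph Γ₂ plus three times the number of triangles of Γ, i.e. |E(L(Γ))| = |E(Γ₂)| + 3·∇(Γ). -/

import Mathlib

open SimpleGraph

/-- The 2-distance graph of a graph `G`: two distinct vertices are adjacent
iff their distance in `G` equals `2`. -/
def twoDistGraph {V : Type*} (G : SimpleGraph V) : SimpleGraph V where
  Adj u v := G.dist u v = 2
  symm := by
    constructor
    intro u v h
    show G.dist v u = 2
    rwa [SimpleGraph.dist_comm]
  loopless := by
    constructor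
    intro v h
    show False
    simp [SimpleGraph.dist_self] at h

/-- `G` has an `n`-cycle subgraph: `n` distinct vertices `v 0, …, v (n-1)` with
`v i` adjacent to `v (i+1 mod n)` for all `i`. -/
def HasNCycle {V : Type*} (G : SimpleGraph V) (n : ℕ) : Prop :=
  ∃ v : ZMod n → V, Function.Injective v ∧ ∀ i, G.Adj (v i) (v (i + 1))

/-- The edged product `C₅|C₃`: a pentagon and a triangle glued along an edge. -/
def C5C3 : SimpleGraph (Fin 6) :=
  SimpleGraph.fromEdgeSet {s(0,1), s(1,2), s(2,3), s(3,4), s(4,5), s(5,0), s(1,5)}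


section Aux

variable {V : Type*} {G : SimpleGraph V}

/-- The set of unordered pairs of distinct vertices having a common neighbour. -/
def Aset (G : SimpleGraph V) : Set (Sym2 V) :=
  {p | ¬ p.IsDiag ∧ ∃ m, ∀ x ∈ p, G.Adj m x}

lemma sym2_cases {α : Type*} (z : Sym2 α) : ∃ a b, z = s(a, b) :=
  z.inductionOn fun a b => ⟨a, b, rfl⟩

lemma uniq_common (h4 : ¬ HasNCycle G 4)
    {u w m m' : V} (huw : u ≠ w) (h1 : G.Adj m u) (h2 : G.Adj m w)
    (h3 : G.Adj m' u) (h5 : G.Adj m' w) : m = m' := by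
  by_contra hmm
  apply h4
  refine ⟨fun i => ![u, m, w, m'] i, ?_, ?_⟩
  · intro i j hij
    have h1' := h1.ne'
    have h2' := h2.ne
    have h3' := h3.ne'
    have h5' := h5.ne
    fin_cases i <;> fin_cases j <;> simp_all [Matrix.vecHead, Matrix.vecTail] <;> rfl
  · intro i
    fin_cases i
    · exact h1.symm
    · exact h2
    · exact h5.symm
    · exact h3

lemma dist_eq_two_iff' {u w : V} :
    G.dist u w = 2 ↔ u ≠ w ∧ ¬ G.Adj u w ∧ ∃ m, G.Adj u m ∧ G.Adj m w := by
  constructor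
  · intro h
    have hne : u ≠ w := by
      rintro rfl; simp [SimpleGraph.dist_self] at h
    have hreach : G.Reachable u w := by
      by_contra hr
      rw [SimpleGraph.dist_eq_zero_iff_eq_or_not_reachable.mpr (Or.inr hr)] at h
      exact two_ne_zero h.symm
    obtain ⟨p, hp⟩ := hreach.exists_walk_length_eq_dist
    rw [h] at hp
    have hadj1 := p.adj_getVert_succ (by omega : 0 < p.length)
    have hadj2 := p.adj_getVert_succ (by omega : 1 < p.length)
    rw [SimpleGraph.Walk.getVert_zero] at hadj1
    have : p.getVert 2 = w := by
      have := p.getVert_length; rw [hp] at this; exact this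
    rw [this] at hadj2
    have hnadj : ¬ G.Adj u w := by
      intro ha
      have := SimpleGraph.dist_le ha.toWalk
      simp [h] at this
    exact ⟨hne, hnadj, p.getVert 1, hadj1, hadj2⟩
  · rintro ⟨hne, hnadj, m, h1, h2⟩
    have hle : G.dist u w ≤ 2 := by
      have := SimpleGraph.dist_le (h1.toWalk.append h2.toWalk)
      simpa using this
    have h0 : G.dist u w ≠ 0 := by
      intro hd
      rcases SimpleGraph.dist_eq_zero_iff_eq_or_not_reachable.mp hd with h | h
      · exact hne h
      · exact h ⟨h1.toWalk.append h2.toWalk⟩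
    have h1' : G.dist u w ≠ 1 := by
      intro hd
      have hreach : G.Reachable u w := ⟨h1.toWalk.append h2.toWalk⟩
      obtain ⟨p, hp⟩ := hreach.exists_walk_length_eq_dist
      rw [hd] at hp
      have := p.adj_getVert_succ (by omega : 0 < p.length)
      rw [SimpleGraph.Walk.getVert_zero] at this
      have h2' : p.getVert 1 = w := by
        have := p.getVert_length; rw [hp] at this; exact this
      rw [h2'] at this
      exact hnadj this
    omega

lemma pairpair {m u w m' u' w' : V}
    (hmu : m ≠ u) (hmw : m ≠ w) (huw : u ≠ w)
    (hmu' : m' ≠ u') (hmw' : m' ≠ w') (huw' : u' ≠ w')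
    (h : s(s(m,u),s(m,w)) = s(s(m',u'),s(m',w'))) :
    m = m' ∧ s(u,w) = s(u',w') := by
  rw [Sym2.eq_iff] at h
  rcases h with ⟨h1, h2⟩ | ⟨h1, h2⟩ <;>
    rw [Sym2.eq_iff] at h1 h2 <;>
    rcases h1 with ⟨rfl, rfl⟩ | ⟨rfl, rfl⟩ <;>
    rcases h2 with ⟨h2a, h2b⟩ | ⟨h2a, h2b⟩ <;>
    simp_all [Sym2.eq_iff]

lemma exL (q : ↥G.lineGraph.edgeSet) :
    ∃ p : ↥(Aset G), ∃ m u w, u ≠ w ∧ G.Adj m u ∧ G.Adj m w ∧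
      p.val = s(u, w) ∧ Sym2.map Subtype.val q.val = s(s(m,u), s(m,w)) := by
  obtain ⟨e, f, hq⟩ := sym2_cases q.val
  have hadj : G.lineGraph.Adj e f := by
    have := q.property
    rw [hq, SimpleGraph.mem_edgeSet] at this
    exact this
  obtain ⟨hef, hne⟩ := hadj
  obtain ⟨m, hm⟩ := hne
  have hme : m ∈ (e : Sym2 V) := hm.1
  have hmf : m ∈ (f : Sym2 V) := hm.2
  obtain ⟨u, hu⟩ := Sym2.mem_iff_exists.mp hme
  obtain ⟨w, hw⟩ := Sym2.mem_iff_exists.mp hmf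
  have hAu : G.Adj m u := by
    have := e.property; rw [hu, SimpleGraph.mem_edgeSet] at this; exact this
  have hAw : G.Adj m w := by
    have := f.property; rw [hw, SimpleGraph.mem_edgeSet] at this; exact this
  have huw : u ≠ w := by
    rintro rfl
    exact hef (Subtype.ext (hu.trans hw.symm))
  refine ⟨⟨s(u,w), ?_, m, ?_⟩, m, u, w, huw, hAu, hAw, rfl, ?_⟩
  · rw [Sym2.mk_isDiag_iff]; exact huw
  · intro x hx
    rcases Sym2.mem_iff.mp hx with rfl | rfl
    · exact hAu
    · exact hAw
  · rw [hq, Sym2.map_pair_eq, hu, hw]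

lemma card_L_eq_A (h4 : ¬ HasNCycle G 4) :
    Nat.card G.lineGraph.edgeSet = Nat.card (Aset G) := by
  let f : ↥G.lineGraph.edgeSet → ↥(Aset G) := fun q => (exL q).choose
  have hf : ∀ q, ∃ m u w, u ≠ w ∧ G.Adj m u ∧ G.Adj m w ∧
      (f q).val = s(u, w) ∧ Sym2.map Subtype.val q.val = s(s(m,u), s(m,w)) :=
    fun q => (exL q).choose_spec
  apply Nat.card_congr (Equiv.ofBijective f ⟨?_, ?_⟩)
  · intro q1 q2 he
    obtain ⟨m1, u1, w1, huw1, h1u, h1w, hp1, hq1⟩ := hf q1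
    obtain ⟨m2, u2, w2, huw2, h2u, h2w, hp2, hq2⟩ := hf q2
    rw [he, hp2] at hp1
    have hadj : G.Adj m2 u1 ∧ G.Adj m2 w1 := by
      rcases Sym2.eq_iff.mp hp1 with ⟨rfl, rfl⟩ | ⟨rfl, rfl⟩
      · exact ⟨h2u, h2w⟩
      · exact ⟨h2w, h2u⟩
    have hm : m1 = m2 := uniq_common h4 huw1 h1u h1w hadj.1 hadj.2
    subst hm
    have : Sym2.map Subtype.val q1.val = Sym2.map Subtype.val q2.val := by
      rw [hq1, hq2]
      rcases Sym2.eq_iff.mp hp1 with ⟨rfl, rfl⟩ | ⟨rfl, rfl⟩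
      · rfl
      · exact Sym2.eq_swap
    exact Subtype.ext (Sym2.map.injective Subtype.val_injective this)
  · intro p
    obtain ⟨u, w, hp⟩ := sym2_cases p.val
    have hpA := p.property
    rw [hp] at hpA
    obtain ⟨hdiag, m, hm⟩ := hpA
    have huw : u ≠ w := fun h => hdiag (Sym2.mk_isDiag_iff.mpr h)
    have hAu : G.Adj m u := hm u (Sym2.mem_mk_left u w)
    have hAw : G.Adj m w := hm w (Sym2.mem_mk_right u w)
    have he : s(m, u) ∈ G.edgeSet := G.mem_edgeSet.mpr hAu
    have hf' : s(m, w) ∈ G.edgeSet := G.mem_edgeSet.mpr hAw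
    have hef : (⟨s(m,u), he⟩ : G.edgeSet) ≠ ⟨s(m,w), hf'⟩ := by
      intro h
      have := Subtype.mk_eq_mk.mp h
      rcases Sym2.eq_iff.mp this with ⟨_, h2⟩ | ⟨h1, h2⟩
      · exact huw h2
      · exact hAu.ne' h2
    have hadjL : G.lineGraph.Adj ⟨s(m,u), he⟩ ⟨s(m,w), hf'⟩ :=
      ⟨hef, m, Sym2.mem_mk_left m u, Sym2.mem_mk_left m w⟩
    refine ⟨⟨s((⟨s(m,u), he⟩ : G.edgeSet), ⟨s(m,w), hf'⟩), G.lineGraph.mem_edgeSet.mpr hadjL⟩, ?_⟩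
    set q : ↥G.lineGraph.edgeSet :=
      ⟨s((⟨s(m,u), he⟩ : G.edgeSet), ⟨s(m,w), hf'⟩), G.lineGraph.mem_edgeSet.mpr hadjL⟩
    obtain ⟨m', u', w', huw', h'u, h'w, hp', hq'⟩ := hf q
    have hqv : Sym2.map Subtype.val q.val = s(s(m,u), s(m,w)) := by
      show Sym2.map Subtype.val s((⟨s(m,u), he⟩ : G.edgeSet), ⟨s(m,w), hf'⟩) = _
      rw [Sym2.map_pair_eq]
    rw [hqv] at hq'
    have := pairpair hAu.ne hAw.ne huw h'u.ne h'w.ne huw' hq'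
    apply Subtype.ext
    rw [hp', hp]
    exact this.2.symm

lemma A_diff_eq : Aset G \ G.edgeSet = (twoDistGraph G).edgeSet := by
  ext p
  obtain ⟨u, w, rfl⟩ := sym2_cases p
  constructor
  · rintro ⟨⟨hdiag, m, hm⟩, hne⟩
    show (twoDistGraph G).Adj u w
    show G.dist u w = 2
    rw [dist_eq_two_iff']
    refine ⟨fun h => hdiag (Sym2.mk_isDiag_iff.mpr h), fun h => hne (G.mem_edgeSet.mpr h),
      m, (hm u (Sym2.mem_mk_left u w)).symm, hm w (Sym2.mem_mk_right u w)⟩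
  · intro h
    have h2 : G.dist u w = 2 := h
    rw [dist_eq_two_iff'] at h2
    obtain ⟨hne, hnadj, m, h1, hmw⟩ := h2
    refine ⟨⟨by simp [Sym2.mk_isDiag_iff, hne], m, ?_⟩, fun hc => hnadj (G.mem_edgeSet.mp hc)⟩
    intro x hx
    rcases Sym2.mem_iff.mp hx with rfl | rfl
    · exact h1.symm
    · exact hmw

lemma sig_ext {P : Finset V → Prop}
    (x y : (t : {s : Finset V // P s}) × {m : V // m ∈ t.val})
    (h1 : x.1.val = y.1.val) (h2 : x.2.val = y.2.val) : x = y := by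
  obtain ⟨⟨t1, ht1⟩, ⟨m1, hm1⟩⟩ := x
  obtain ⟨⟨t2, ht2⟩, ⟨m2, hm2⟩⟩ := y
  simp only at h1 h2
  subst h1
  subst h2
  rfl

lemma card_B2 [DecidableEq V] (h4 : ¬ HasNCycle G 4) :
    Nat.card ↥(Aset G ∩ G.edgeSet) =
      Nat.card ((t : {s : Finset V // G.IsNClique 3 s}) × {m : V // m ∈ t.val}) := by
  have exB : ∀ p : ↥(Aset G ∩ G.edgeSet),
      ∃ x : (t : {s : Finset V // G.IsNClique 3 s}) × {m : V // m ∈ t.val},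
        ∃ u w, u ≠ w ∧ G.Adj u w ∧ p.val = s(u, w) ∧
          G.Adj x.2.val u ∧ G.Adj x.2.val w ∧ x.1.val = {x.2.val, u, w} := by
    intro p
    obtain ⟨u, w, hp⟩ := sym2_cases p.val
    obtain ⟨⟨hdiag, m, hm⟩, hedge⟩ := p.property
    rw [hp] at hdiag hm hedge
    have huw : u ≠ w := fun h => hdiag (Sym2.mk_isDiag_iff.mpr h)
    have hAuw : G.Adj u w := G.mem_edgeSet.mp hedge
    have hAu : G.Adj m u := hm u (Sym2.mem_mk_left u w)
    have hAw : G.Adj m w := hm w (Sym2.mem_mk_right u w)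
    have hcl : G.IsNClique 3 {m, u, w} := is3Clique_triple_iff.mpr ⟨hAu, hAw, hAuw⟩
    exact ⟨⟨⟨{m,u,w}, hcl⟩, ⟨m, by simp⟩⟩, u, w, huw, hAuw, hp, hAu, hAw, rfl⟩
  let f := fun p => (exB p).choose
  have hf : ∀ p, ∃ u w, u ≠ w ∧ G.Adj u w ∧ p.val = s(u, w) ∧
      G.Adj (f p).2.val u ∧ G.Adj (f p).2.val w ∧ (f p).1.val = {(f p).2.val, u, w} :=
    fun p => (exB p).choose_spec
  apply Nat.card_congr (Equiv.ofBijective f ⟨?_, ?_⟩)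
  · intro p1 p2 he
    obtain ⟨u1, w1, huw1, ha1, hp1, hm1u, hm1w, ht1⟩ := hf p1
    obtain ⟨u2, w2, huw2, ha2, hp2, hm2u, hm2w, ht2⟩ := hf p2
    rw [he] at hm1u hm1w ht1
    set m := (f p2).2.val
    have hmu1 : m ≠ u1 := hm1u.ne
    have hmw1 : m ≠ w1 := hm1w.ne
    have hmu2 : m ≠ u2 := hm2u.ne
    have hmw2 : m ≠ w2 := hm2w.ne
    have hpair : ({u1, w1} : Finset V) = {u2, w2} := by
      have h12 : ({m, u1, w1} : Finset V) = {m, u2, w2} := ht1.symm.trans ht2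
      have hne1 : m ∉ ({u1, w1} : Finset V) := by simp [hmu1, hmw1]
      have hne2 : m ∉ ({u2, w2} : Finset V) := by simp [hmu2, hmw2]
      have := congrArg (Finset.erase · m) h12
      simpa [Finset.erase_insert hne1, Finset.erase_insert hne2] using this
    have : s(u1, w1) = s(u2, w2) := by
      have hu1 : u1 = u2 ∨ u1 = w2 := by
        have : u1 ∈ ({u2, w2} : Finset V) := hpair ▸ (by simp)
        simpa using this
      have hw1 : w1 = u2 ∨ w1 = w2 := by
        have : w1 ∈ ({u2, w2} : Finset V) := hpair ▸ (by simp)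
        simpa using this
      rcases hu1 with rfl | rfl <;> rcases hw1 with rfl | rfl <;>
        simp_all [Sym2.eq_iff, Sym2.eq_swap]
    exact Subtype.ext (hp1.trans (this.trans hp2.symm))
  · rintro ⟨⟨t, ht⟩, ⟨m, hmt⟩⟩
    obtain ⟨a, b, c, hab, hac, hbc, rfl⟩ := is3Clique_iff.mp ht
    have key : ∀ u w : V, G.Adj u w → G.Adj m u → G.Adj m w →
        ({m, u, w} : Finset V) = {a, b, c} →
        ∃ p, f p = ⟨⟨{a,b,c}, ht⟩, ⟨m, hmt⟩⟩ := by
      intro u w hAuw hAu hAw htt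
      have huw : u ≠ w := hAuw.ne
      have hpA : s(u, w) ∈ Aset G ∩ G.edgeSet := by
        refine ⟨⟨by simp [Sym2.mk_isDiag_iff, huw], m, ?_⟩, G.mem_edgeSet.mpr hAuw⟩
        intro x hx
        rcases Sym2.mem_iff.mp hx with rfl | rfl
        · exact hAu
        · exact hAw
      refine ⟨⟨s(u,w), hpA⟩, ?_⟩
      obtain ⟨u', w', huw', ha', hp', hm'u, hm'w, ht'⟩ := hf ⟨s(u,w), hpA⟩
      have hpq : s(u,w) = s(u',w') := hp'
      set m' := (f ⟨s(u,w), hpA⟩).2.val with hm'def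
      have hm'uw : G.Adj m' u ∧ G.Adj m' w := by
        rcases Sym2.eq_iff.mp hpq with ⟨rfl, rfl⟩ | ⟨rfl, rfl⟩
        · exact ⟨hm'u, hm'w⟩
        · exact ⟨hm'w, hm'u⟩
      have hmm : m' = m := uniq_common h4 huw hm'uw.1 hm'uw.2 hAu hAw
      have htval : (f ⟨s(u,w), hpA⟩).1.val = {a, b, c} := by
        rw [ht', hmm]
        rw [← htt]
        rcases Sym2.eq_iff.mp hpq with ⟨rfl, rfl⟩ | ⟨rfl, rfl⟩
        · rfl
        · ext x; simp; tauto
      exact sig_ext _ _ htval hmm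
    simp only [Finset.mem_insert, Finset.mem_singleton] at hmt
    rcases hmt with rfl | rfl | rfl
    · exact key b c hbc hab hac rfl
    · exact key a c hac hab.symm hbc (by ext x; simp; tauto)
    · exact key a b hab hac.symm hbc.symm (by ext x; simp; tauto)

lemma card_sig [Fintype V] :
    Nat.card ((t : {s : Finset V // G.IsNClique 3 s}) × {m : V // m ∈ t.val}) =
      3 * Nat.card {s : Finset V // G.IsNClique 3 s} := by
  classical
  haveI : Fintype {s : Finset V // G.IsNClique 3 s} := Fintype.ofFinite _
  rw [Nat.card_eq_fintype_card, Nat.card_eq_fintype_card, Fintype.card_sigma]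
  have h3 : ∀ t : {s : Finset V // G.IsNClique 3 s},
      Fintype.card {m : V // m ∈ t.val} = 3 := by
    intro t
    rw [Fintype.card_coe]
    exact t.property.2
  simp only [h3, Finset.sum_const, smul_eq_mul, Finset.card_univ]
  ring

end Aux

/-- For a graph with no 4-cycle subgraph, the number of edges of the line graph
equals the number of edges of the 2-distance graph plus three times the number
of triangles. -/
theorem card_edges_lineGraph_of_c4Free {V : Type*} [Fintype V] (G : SimpleGraph V)
    (h4 : ¬ HasNCycle G 4) :
    Nat.card G.lineGraph.edgeSet =
      Nat.card (twoDistGraph G).edgeSet +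
        3 * Nat.card {s : Finset V // G.IsNClique 3 s} := by
  classical
  rw [card_L_eq_A h4]
  have hsplit : Aset G = (Aset G \ G.edgeSet) ∪ (Aset G ∩ G.edgeSet) :=
    (Set.diff_union_inter _ _).symm
  rw [Nat.card_coe_set_eq, hsplit,
    Set.ncard_union_eq Set.disjoint_sdiff_inter (Set.toFinite _) (Set.toFinite _)]
  rw [A_diff_eq, ← Nat.card_coe_set_eq, ← Nat.card_coe_set_eq,
    card_B2 h4, card_sig]
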